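/- arXiv:2601.03691 — 4 statements merged into one kernel-verified Lean document; each statement's English description precedes it below -/
import Mathlib

section
/- Let k be a field of characteristic 2. There is no k-subspace W of sl₂(k) such that sl₂(k) is the internal direct sum of W and the line k·1 spanned by the identity matrix, and W is closed under the Lie bracket (⁅w,w'⁆ ∈ W for all w, w' ∈ W). In other words, the extension 0 → k·1 → sl₂(k) → sl₂(k)/k·1 → 0 of Lie algebras does not split. -/
/-- Over a field `k` of characteristic `2`, there is no `k`-subspace `W` of `sl₂(k)`
that is a vector-space complement of the line `k·1` spanned by the identity matrix and is
closed under the commutator bracket: the extension `0 → k·1 → sl₂(k) → sl₂(k)/k·1 → 0`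
does not split. -/
theorem sl2_extension_does_not_split (k : Type*) [Field k] (h2 : (2 : k) = 0) :
    ¬ ∃ W : Submodule k (Matrix (Fin 2) (Fin 2) k),
        W ⊓ Submodule.span k {(1 : Matrix (Fin 2) (Fin 2) k)} = ⊥ ∧
        W ⊔ Submodule.span k {(1 : Matrix (Fin 2) (Fin 2) k)} =
          LinearMap.ker (Matrix.traceLinearMap (Fin 2) k k) ∧
        (∀ w ∈ W, ∀ w' ∈ W, w * w' - w' * w ∈ W) := by
  rintro ⟨W, hinf, hsup, hbr⟩
  set e : Matrix (Fin 2) (Fin 2) k := Matrix.single 0 1 1 with he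
  set f : Matrix (Fin 2) (Fin 2) k := Matrix.single 1 0 1 with hf
  have hetr : e ∈ W ⊔ Submodule.span k {(1 : Matrix (Fin 2) (Fin 2) k)} := by
    rw [hsup]
    simp [he, Matrix.trace_fin_two, Matrix.single]
  have hftr : f ∈ W ⊔ Submodule.span k {(1 : Matrix (Fin 2) (Fin 2) k)} := by
    rw [hsup]
    simp [hf, Matrix.trace_fin_two, Matrix.single]
  obtain ⟨y, hy, z, hz, hyz⟩ := Submodule.mem_sup.mp hetr
  obtain ⟨y', hy', z', hz', hyz'⟩ := Submodule.mem_sup.mp hftr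
  obtain ⟨c, rfl⟩ := Submodule.mem_span_singleton.mp hz
  obtain ⟨d, rfl⟩ := Submodule.mem_span_singleton.mp hz'
  have hyv : y = e - c • 1 := by rw [← hyz]; abel
  have hy'v : y' = f - d • 1 := by rw [← hyz']; abel
  have hef : e * f - f * e = 1 := by
    ext i j
    fin_cases i <;> fin_cases j <;>
      simp [he, hf, Matrix.mul_apply, Matrix.single, Matrix.one_apply,
        Fin.sum_univ_two] <;>
      linear_combination -h2
  have key : y * y' - y' * y = 1 := by
    have : y * y' - y' * y = e * f - f * e := by
      rw [hyv, hy'v]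
      simp only [sub_mul, mul_sub, smul_sub, sub_smul, smul_mul_assoc, mul_smul_comm,
        one_mul, mul_one, smul_smul, mul_comm d c, ← he, ← hf]
      abel
    rw [this, hef]
  have h1W : (1 : Matrix (Fin 2) (Fin 2) k) ∈ W := key ▸ hbr y hy y' hy'
  have h1span : (1 : Matrix (Fin 2) (Fin 2) k) ∈
      Submodule.span k {(1 : Matrix (Fin 2) (Fin 2) k)} := Submodule.mem_span_singleton_self _
  have : (1 : Matrix (Fin 2) (Fin 2) k) ∈
      W ⊓ Submodule.span k {(1 : Matrix (Fin 2) (Fin 2) k)} := ⟨h1W, h1span⟩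
  rw [hinf] at this
  exact one_ne_zero (Submodule.mem_bot _ |>.mp this)
end

section
/- Let k be a field of characteristic 2. Let Z be the Lie ideal of gl₂(k) consisting of the scalar matrices (which is the center of the Lie algebra gl₂(k)), and let pgl₂(k) be the quotient Lie algebra gl₂(k)/Z. Then there is no isomorphism of Lie algebras over k between sl₂(k) and pgl₂(k). -/
open LieAlgebra

attribute [local instance 100] LieRing.ofAssociativeRing

lemma aux_bracket_scalar (k : Type*) [Field k]
    (A B : Matrix (Fin 2) (Fin 2) k) (h2 : (2 : k) = 0)
    (hA : Matrix.trace A = 0) (hB : Matrix.trace B = 0) :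
    ⁅A, B⁆ = (A 0 1 * B 1 0 - A 1 0 * B 0 1) • (1 : Matrix (Fin 2) (Fin 2) k) := by
  rw [Matrix.trace_fin_two] at hA hB
  ext i j
  rw [Ring.lie_def]
  fin_cases i <;> fin_cases j <;>
    simp only [Fin.zero_eta, Fin.mk_one, Matrix.sub_apply, Matrix.mul_apply, Fin.sum_univ_two,
      Matrix.smul_apply, Matrix.one_apply_eq, Matrix.one_apply_ne, smul_eq_mul, Fin.isValue,
      ne_eq, Fin.one_eq_zero_iff, Fin.zero_eq_one_iff, OfNat.ofNat_ne_one, not_false_iff,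
      mul_zero, mul_one, Nat.succ_ne_self, one_ne_zero, zero_ne_one]
  · ring
  · linear_combination (-B 0 1) * hA + A 0 1 * hB + (A 0 0 * B 0 1 - A 0 1 * B 0 0) * h2
  · linear_combination (-B 1 0) * hA + A 1 0 * hB + (A 1 1 * B 1 0 - A 1 0 * B 1 1) * h2
  · linear_combination (A 1 0 * B 0 1 - A 0 1 * B 1 0) * h2

lemma aux_sl2_two_step (k : Type*) [Field k] (h2 : (2 : k) = 0)
    (a b c : SpecialLinear.sl (Fin 2) k) : ⁅⁅a, b⁆, c⁆ = 0 := by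
  have ha : Matrix.trace (a : Matrix (Fin 2) (Fin 2) k) = 0 := a.2
  have hb : Matrix.trace (b : Matrix (Fin 2) (Fin 2) k) = 0 := b.2
  apply Subtype.ext
  rw [LieSubalgebra.coe_bracket, LieSubalgebra.coe_bracket,
    aux_bracket_scalar k _ _ h2 ha hb, ZeroMemClass.coe_zero]
  simp [Ring.lie_def, Matrix.smul_mul, Matrix.mul_smul]

/-- Over a field `k` of characteristic `2`, there is no isomorphism of Lie algebras
between `sl₂(k)` and `pgl₂(k) = gl₂(k)/Z`, where `Z` is the center of `gl₂(k)`
(the scalar matrices). -/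
theorem sl2_not_iso_pgl2_char_two (k : Type*) [Field k] (h2 : (2 : k) = 0) :
    IsEmpty ((SpecialLinear.sl (Fin 2) k) ≃ₗ⁅k⁆
      (Matrix (Fin 2) (Fin 2) k ⧸ LieAlgebra.center k (Matrix (Fin 2) (Fin 2) k))) := by
  constructor
  intro f
  have key : ∀ u v w : (Matrix (Fin 2) (Fin 2) k ⧸
      LieAlgebra.center k (Matrix (Fin 2) (Fin 2) k)), ⁅⁅u, v⁆, w⁆ = 0 := by
    intro u v w
    obtain ⟨a, rfl⟩ := f.surjective u
    obtain ⟨b, rfl⟩ := f.surjective v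
    obtain ⟨c, rfl⟩ := f.surjective w
    rw [← LieHom.map_lie, ← LieHom.map_lie, aux_sl2_two_step k h2, map_zero]
  set E11 : Matrix (Fin 2) (Fin 2) k := Matrix.single 0 0 1 with hE11
  set E12 : Matrix (Fin 2) (Fin 2) k := Matrix.single 0 1 1 with hE12
  have h := key (LieSubmodule.Quotient.mk (N := LieAlgebra.center k _) E11)
    (LieSubmodule.Quotient.mk (N := LieAlgebra.center k _) E12)
    (LieSubmodule.Quotient.mk (N := LieAlgebra.center k _) E11)
  rw [← LieSubmodule.Quotient.mk_bracket, ← LieSubmodule.Quotient.mk_bracket,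
    LieSubmodule.Quotient.mk_eq_zero', LieModule.mem_maxTrivSubmodule] at h
  have h' := h E11
  apply_fun (fun M => M 0 1) at h'
  simp only [Ring.lie_def, Matrix.sub_apply, Matrix.mul_apply, Fin.sum_univ_two,
    Matrix.zero_apply, hE11, hE12, Matrix.single] at h'
  norm_num at h'
end

section
/- Let R be a commutative Noetherian local ring, let φ : R^s → R^r be an injective R-linear map, and let M = coker(φ). Let φ* : Hom_R(R^r,R) → Hom_R(R^s,R) be the dual (transpose) map and let E = coker(φ*). Then the R-module Hom_R(M,R) is free if and only if there exists an exact sequence 0 → F₂ → F₁ → F₀ → E → 0 of R-modules in which each Fᵢ is a finite free R-module (i.e. E has a finite free resolution of length at most 2). -/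
open LinearMap Function

section Schanuel
variable {R : Type*} [CommRing R] {P Q E : Type*}
  [AddCommGroup P] [AddCommGroup Q] [AddCommGroup E]
  [Module R P] [Module R Q] [Module R E]

theorem pullbackEquiv (f : P →ₗ[R] E) (g : Q →ₗ[R] E)
    (hf : Surjective f) [Module.Projective R Q] :
    Nonempty ((ker ((f ∘ₗ fst R P Q) - (g ∘ₗ snd R P Q))) ≃ₗ[R] (↥(ker f) × Q)) := by
  obtain ⟨h, hh⟩ := Module.projective_lifting_property f g hf
  have hfh : ∀ q, f (h q) = g q := fun q => DFunLike.congr_fun hh q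
  have memX : ∀ x : P × Q, x ∈ ker ((f ∘ₗ fst R P Q) - (g ∘ₗ snd R P Q)) ↔
      f x.1 = g x.2 := by
    intro x
    simp [LinearMap.mem_ker, LinearMap.sub_apply, sub_eq_zero]
  set X := ker ((f ∘ₗ fst R P Q) - (g ∘ₗ snd R P Q)) with hX
  let ℓ0 : (↥(ker f) × Q) →ₗ[R] P × Q :=
    LinearMap.prod ((ker f).subtype ∘ₗ fst R (ker f) Q + h ∘ₗ snd R (ker f) Q)
      (snd R (ker f) Q)
  have hℓ0 : ∀ a : ↥(ker f) × Q, ℓ0 a ∈ X := by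
    intro a
    rw [memX]
    have ha : f a.1.1 = 0 := a.1.2
    simp [ℓ0, map_add, ha, hfh]
  let ℓ : (↥(ker f) × Q) →ₗ[R] X := LinearMap.codRestrict X ℓ0 hℓ0
  have hbij : Bijective ℓ := by
    constructor
    · intro a b hab
      have hab' : (ℓ a : P × Q) = (ℓ b : P × Q) := congrArg Subtype.val hab
      have h2 : a.2 = b.2 := by
        simpa [ℓ, ℓ0] using congrArg Prod.snd hab'
      have h1 : a.1.1 + h a.2 = b.1.1 + h b.2 := by
        simpa [ℓ, ℓ0] using congrArg Prod.fst hab'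
      rw [h2] at h1
      exact Prod.ext (Subtype.ext (by exact add_right_cancel h1)) h2
    · rintro ⟨x, hx⟩
      rw [memX] at hx
      refine ⟨(⟨x.1 - h x.2, ?_⟩, x.2), ?_⟩
      · simp [LinearMap.mem_ker, map_sub, hfh, hx]
      · apply Subtype.ext
        show ℓ0 _ = x
        simp [ℓ0]
  exact ⟨(LinearEquiv.ofBijective ℓ hbij).symm⟩

/-- Schanuel's lemma. -/
theorem schanuel_ker (f : P →ₗ[R] E) (g : Q →ₗ[R] E)
    (hf : Surjective f) (hg : Surjective g)
    [Module.Projective R P] [Module.Projective R Q] :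
    Nonempty ((↥(ker f) × Q) ≃ₗ[R] (↥(ker g) × P)) := by
  have swapmem : ∀ x : P × Q, x ∈ ker ((f ∘ₗ fst R P Q) - (g ∘ₗ snd R P Q)) ↔
      (x.2, x.1) ∈ ker ((g ∘ₗ fst R Q P) - (f ∘ₗ snd R Q P)) := by
    intro x
    simp only [LinearMap.mem_ker, LinearMap.sub_apply, LinearMap.comp_apply,
      fst_apply, snd_apply, sub_eq_zero]
    exact ⟨fun h => h.symm, fun h => h.symm⟩
  obtain ⟨e1⟩ := pullbackEquiv f g hf
  obtain ⟨e2⟩ := pullbackEquiv g f hg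
  refine ⟨e1.symm.trans ((?_ : _ ≃ₗ[R] _).trans e2)⟩
  exact
  { toFun := fun x => ⟨(x.1.2, x.1.1), (swapmem x.1).mp x.2⟩
    invFun := fun x => ⟨(x.1.2, x.1.1), (swapmem _).mpr (by simpa using x.2)⟩
    map_add' := fun x y => rfl
    map_smul' := fun c x => rfl
    left_inv := fun x => rfl
    right_inv := fun x => rfl }

/-- `p ×ˢ ⊥ ≃ p` as modules. -/
def prodBotEquiv {M N : Type*} [AddCommGroup M] [AddCommGroup N] [Module R M]
    [Module R N] (p : Submodule R M) :
    (p.prod (⊥ : Submodule R N)) ≃ₗ[R] p where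
  toFun x := ⟨x.1.1, x.2.1⟩
  invFun y := ⟨(y.1, 0), ⟨y.2, Submodule.zero_mem _⟩⟩
  map_add' x y := rfl
  map_smul' c x := rfl
  left_inv x := by
    apply Subtype.ext
    have : x.1.2 = 0 := x.2.2
    exact Prod.ext rfl this.symm
  right_inv y := rfl

end Schanuel


set_option maxHeartbeats 2000000 in

/-- Let `R` be a commutative Noetherian local ring, `φ : R^s → R^r` an injective linear map,
`M = coker φ` and `E = coker φ*` (the cokernel of the dual map). Then `Hom_R(M, R)` is a
free `R`-module if and only if `E` admits a finite free resolution of length at most `2`,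
i.e. there is an exact sequence `0 → F₂ → F₁ → F₀ → E → 0` with each `Fᵢ` finite free. -/
theorem dual_free_iff_finite_free_resolution (R : Type*) [CommRing R]
    [IsNoetherianRing R] [IsLocalRing R] (s r : ℕ)
    (φ : (Fin s → R) →ₗ[R] (Fin r → R)) (hφ : Function.Injective φ) :
    Module.Free R ((((Fin r → R) ⧸ LinearMap.range φ)) →ₗ[R] R) ↔
      ∃ (n₂ n₁ n₀ : ℕ) (f₂ : (Fin n₂ → R) →ₗ[R] (Fin n₁ → R))
        (f₁ : (Fin n₁ → R) →ₗ[R] (Fin n₀ → R))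
        (f₀ : (Fin n₀ → R) →ₗ[R]
          (Module.Dual R (Fin s → R) ⧸ LinearMap.range φ.dualMap)),
        Function.Injective f₂ ∧ Function.Exact f₂ f₁ ∧ Function.Exact f₁ f₀ ∧
          Function.Surjective f₀ := by
  classical
  -- the dual equivalences for finite free modules
  let dr : (Fin r → R) ≃ₗ[R] Module.Dual R (Fin r → R) :=
    (Pi.basisFun R (Fin r)).toDualEquiv
  let ds : (Fin s → R) ≃ₗ[R] Module.Dual R (Fin s → R) :=
    (Pi.basisFun R (Fin s)).toDualEquiv
  haveI : Module.Free R (Module.Dual R (Fin r → R)) := Module.Free.of_equiv dr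
  haveI : Module.Free R (Module.Dual R (Fin s → R)) := Module.Free.of_equiv ds
  set K : Submodule R (Module.Dual R (Fin r → R)) := ker φ.dualMap with hK
  -- `Hom(M, R) ≃ K = ker φ*`
  let d : (((Fin r → R) ⧸ LinearMap.range φ) →ₗ[R] R) →ₗ[R]
      Module.Dual R (Fin r → R) := (LinearMap.range φ).mkQ.dualMap
  have hdinj : Injective d :=
    LinearMap.dualMap_injective_of_surjective (Submodule.mkQ_surjective _)
  have hdrange : LinearMap.range d = K := by
    apply le_antisymm
    · rintro _ ⟨ψ, rfl⟩
      show φ.dualMap (d ψ) = 0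
      refine LinearMap.ext fun x => ?_
      have hx : φ x ∈ LinearMap.range φ := ⟨x, rfl⟩
      show ψ ((LinearMap.range φ).mkQ (φ x)) = 0
      rw [Submodule.mkQ_apply, (Submodule.Quotient.mk_eq_zero _).mpr hx, map_zero]
    · intro g hg
      have hg' : ∀ x, g (φ x) = 0 := by
        intro x
        have := DFunLike.congr_fun (hg : φ.dualMap g = 0) x
        simpa using this
      have hle : LinearMap.range φ ≤ ker g := by
        rintro _ ⟨x, rfl⟩
        exact hg' x
      refine ⟨(LinearMap.range φ).liftQ g hle, ?_⟩
      refine LinearMap.ext fun x => ?_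
      exact DFunLike.congr_fun ((LinearMap.range φ).liftQ_mkQ g hle) x
  let keyEquiv : (((Fin r → R) ⧸ LinearMap.range φ) →ₗ[R] R) ≃ₗ[R] K :=
    (LinearEquiv.ofInjective d hdinj).trans (LinearEquiv.ofEq _ _ hdrange)
  -- `K` is finitely generated
  haveI : IsNoetherian R (Module.Dual R (Fin r → R)) :=
    isNoetherian_of_linearEquiv dr
  haveI hKfin : Module.Finite R K :=
    Module.Finite.iff_fg.mpr (IsNoetherian.noetherian K)
  constructor
  · -- forward direction
    intro hfree
    haveI : Module.Free R K := Module.Free.of_equiv keyEquiv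
    let ι := Module.Free.ChooseBasisIndex R K
    let b : Module.Basis ι R K := Module.Free.chooseBasis R K
    let n₂ := Fintype.card ι
    let eK : (Fin n₂ → R) ≃ₗ[R] K := (b.reindex (Fintype.equivFin ι)).equivFun.symm
    refine ⟨n₂, r, s, dr.symm.toLinearMap ∘ₗ K.subtype ∘ₗ eK.toLinearMap,
      ds.symm.toLinearMap ∘ₗ φ.dualMap ∘ₗ dr.toLinearMap,
      (LinearMap.range φ.dualMap).mkQ ∘ₗ ds.toLinearMap, ?_, ?_, ?_, ?_⟩
    · exact dr.symm.injective.comp (K.injective_subtype.comp eK.injective)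
    · rw [LinearMap.exact_iff]
      rw [LinearMap.ker_comp, LinearEquiv.ker, Submodule.comap_bot,
        LinearMap.ker_comp]
      rw [LinearMap.range_comp, LinearMap.range_comp, LinearEquiv.range,
        Submodule.map_top, Submodule.range_subtype]
      rw [Submodule.comap_equiv_eq_map_symm]
    · rw [LinearMap.exact_iff]
      rw [LinearMap.ker_comp, Submodule.ker_mkQ]
      rw [LinearMap.range_comp, LinearMap.range_comp, LinearEquiv.range,
        Submodule.map_top]
      rw [Submodule.comap_equiv_eq_map_symm]
    · exact (Submodule.mkQ_surjective _).comp ds.surjective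
  · -- backward direction
    rintro ⟨n₂, n₁, n₀, f₂, f₁, f₀, h2inj, hex21, hex10, h0surj⟩
    -- Step 1 : Schanuel for the two presentations of `E`
    set π := (LinearMap.range φ.dualMap).mkQ with hπ
    obtain ⟨e0⟩ := schanuel_ker f₀ π h0surj (Submodule.mkQ_surjective _)
    let e0' : (↥(ker f₀) × Module.Dual R (Fin s → R)) ≃ₗ[R]
        (↥(LinearMap.range φ.dualMap) × (Fin n₀ → R)) :=
      e0.trans (LinearEquiv.prodCongr
        (LinearEquiv.ofEq _ _ (Submodule.ker_mkQ _)) (LinearEquiv.refl R _))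
    -- Step 2 : Schanuel for the second syzygies
    have hmem : ∀ x, f₁ x ∈ ker f₀ := fun x => hex10.apply_apply_eq_zero x
    let c : (Fin n₁ → R) →ₗ[R] ↥(ker f₀) := LinearMap.codRestrict _ f₁ hmem
    let u : ((Fin n₁ → R) × Module.Dual R (Fin s → R)) →ₗ[R]
        (↥(LinearMap.range φ.dualMap) × (Fin n₀ → R)) :=
      e0'.toLinearMap ∘ₗ (c.prodMap (LinearMap.id))
    let v : (Module.Dual R (Fin r → R) × (Fin n₀ → R)) →ₗ[R]
        (↥(LinearMap.range φ.dualMap) × (Fin n₀ → R)) :=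
      φ.dualMap.rangeRestrict.prodMap (LinearMap.id)
    have hcsurj : Surjective c := by
      rintro ⟨y, hy⟩
      obtain ⟨x, hx⟩ := (hex10 y).mp hy
      exact ⟨x, Subtype.ext hx⟩
    have husurj : Surjective u := by
      apply e0'.surjective.comp
      rw [LinearMap.coe_prodMap]
      exact Surjective.prodMap hcsurj surjective_id
    have hvsurj : Surjective v := by
      rw [LinearMap.coe_prodMap]
      exact Surjective.prodMap φ.dualMap.surjective_rangeRestrict surjective_id
    obtain ⟨e⟩ := schanuel_ker (E := ↥(LinearMap.range φ.dualMap) × (Fin n₀ → R)) u v husurj hvsurj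
    -- identify the kernels
    have hkeru : ker u = (LinearMap.range f₂).prod (⊥ : Submodule R _) := by
      rw [LinearMap.ker_comp, LinearEquiv.ker, Submodule.comap_bot,
        LinearMap.ker_prodMap, LinearMap.ker_id, LinearMap.ker_codRestrict,
        LinearMap.exact_iff.mp hex21]
    have hkerv : ker v = K.prod (⊥ : Submodule R _) := by
      rw [LinearMap.ker_prodMap, LinearMap.ker_id, LinearMap.ker_rangeRestrict]
    -- hence `K × free ≃ free`
    let eKv : ↥(ker v) ≃ₗ[R] K :=
      (LinearEquiv.ofEq _ _ hkerv).trans (prodBotEquiv K)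
    let eKu : ↥(ker u) ≃ₗ[R] (Fin n₂ → R) :=
      ((LinearEquiv.ofEq _ _ hkeru).trans
        (prodBotEquiv (LinearMap.range f₂))).trans
        (LinearEquiv.ofInjective f₂ h2inj).symm
    let ebig : (K × ((Fin n₁ → R) × Module.Dual R (Fin s → R))) ≃ₗ[R]
        ((Fin n₂ → R) × (Module.Dual R (Fin r → R) × (Fin n₀ → R))) :=
      ((LinearEquiv.prodCongr eKv (LinearEquiv.refl R _)).symm.trans e.symm).trans
        (LinearEquiv.prodCongr eKu (LinearEquiv.refl R _))
    haveI : Module.Free R (K × ((Fin n₁ → R) × Module.Dual R (Fin s → R))) :=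
      Module.Free.of_equiv ebig.symm
    haveI : Module.Projective R K := by
      refine Module.Projective.of_split
        (LinearMap.inl R K ((Fin n₁ → R) × Module.Dual R (Fin s → R)))
        (LinearMap.fst R K _) ?_
      ext x <;> simp
    haveI : Module.FinitePresentation R K := Module.finitePresentation_of_finite R K
    haveI : Module.Free R K := by exact Module.free_of_flat_of_isLocalRing (R := R) (P := ↥K)
    exact Module.Free.of_equiv keyEquiv.symm
end

section
/- Let k be a field of characteristic 2 and let n, r be integers with n ≥ 2 and 1 ≤ r ≤ n-1. In the polynomial ring A = k[x,y,z] let P = z² + x²·y + y^n·z + x·y^{n-r}·z and let 𝔟 be the ideal of A generated by P together with the three partial derivatives ∂P/∂x, ∂P/∂y, ∂P/∂z. Then the quotient ring A/𝔟 is a finite-dimensional k-vector space of dimension exactly 4n - 2r. -/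
open MvPolynomial

namespace TjurinaAux

variable {k : Type*} [Field k]

/-- exponent finsupp for `x^A y^B z^C` -/
noncomputable def E (A B C : ℕ) : Fin 3 →₀ ℕ :=
  Finsupp.single 0 A + Finsupp.single 1 B + Finsupp.single 2 C

lemma E_eta (u : Fin 3 →₀ ℕ) : E (u 0) (u 1) (u 2) = u := by
  ext i; fin_cases i <;> simp [E, Finsupp.single_apply]

lemma E_inj {A B C A' B' C' : ℕ} : E A B C = E A' B' C' ↔ (A = A' ∧ B = B' ∧ C = C') := by
  constructor
  · intro h
    have h0 := DFunLike.congr_fun h 0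
    have h1 := DFunLike.congr_fun h 1
    have h2 := DFunLike.congr_fun h 2
    simp [E, Finsupp.single_apply] at h0 h1 h2
    exact ⟨h0, h1, h2⟩
  · rintro ⟨rfl, rfl, rfl⟩; rfl

noncomputable def mono (A B C : ℕ) : MvPolynomial (Fin 3) k := monomial (E A B C) 1

lemma X_pows (A B C : ℕ) :
    (X 0 ^ A * X 1 ^ B * X 2 ^ C : MvPolynomial (Fin 3) k) = mono A B C := by
  rw [X_pow_eq_monomial, X_pow_eq_monomial, X_pow_eq_monomial, monomial_mul, monomial_mul]
  simp [mono, E]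

lemma coeff_mono (A B C A' B' C' : ℕ) :
    coeff (E A B C) (mono A' B' C' : MvPolynomial (Fin 3) k)
      = if A' = A ∧ B' = B ∧ C' = C then 1 else 0 := by
  rw [mono, coeff_monomial]
  by_cases h : A' = A ∧ B' = B ∧ C' = C
  · rw [if_pos (E_inj.2 h), if_pos h]
  · rw [if_neg (fun he => h (E_inj.1 he)), if_neg h]

lemma monomial_eq_smul (u : Fin 3 →₀ ℕ) (a : k) :
    monomial u a = a • (X 0 ^ (u 0) * X 1 ^ (u 1) * X 2 ^ (u 2) : MvPolynomial (Fin 3) k) := by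
  rw [X_pows, mono, smul_monomial, smul_eq_mul, mul_one, E_eta]

section lam

variable (k)

/-- the coefficient functional of `x^δ z^ε y^d` in the normal form -/
noncomputable def lamG (r δ ε d : ℕ) : MvPolynomial (Fin 3) k →ₗ[k] k :=
  ∑ s ∈ Finset.range (d + 1),
    if 2*r*s ≤ d then lcoeff k (E (2*s + δ) (d - 2*r*s) ε) else 0

noncomputable def extra (mm : ℕ) (c : k) (d : ℕ) : MvPolynomial (Fin 3) k →ₗ[k] k :=
  if d = mm then c • lcoeff k (E 2 0 0) else 0

noncomputable def lam4 (r mm : ℕ) (c : k) (d : ℕ) : MvPolynomial (Fin 3) k →ₗ[k] k :=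
  lamG k r 1 1 d + extra k mm c d

end lam

lemma lamG_mono {r : ℕ} (hr : 1 ≤ r) {δ : ℕ} (hδ : δ ≤ 1) (ε d A B C : ℕ) :
    lamG k r δ ε d (mono A B C)
      = if A % 2 = δ % 2 ∧ C = ε ∧ r * (A - δ) + B = d then 1 else 0 := by
  rw [lamG, LinearMap.sum_apply]
  have hterm : ∀ s ∈ Finset.range (d+1),
      ((if 2*r*s ≤ d then lcoeff k (E (2*s + δ) (d - 2*r*s) ε) else 0) :
        MvPolynomial (Fin 3) k →ₗ[k] k) (mono A B C)
      = if (A = 2*s + δ ∧ B = d - 2*r*s ∧ C = ε ∧ 2*r*s ≤ d) then 1 else 0 := by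
    intro s _
    by_cases h : 2*r*s ≤ d
    · rw [if_pos h, lcoeff_apply, coeff_mono]
      by_cases h2 : A = 2*s + δ ∧ B = d - 2*r*s ∧ C = ε
      · rw [if_pos h2, if_pos ⟨h2.1, h2.2.1, h2.2.2, h⟩]
      · rw [if_neg h2, if_neg (fun hx => h2 ⟨hx.1, hx.2.1, hx.2.2.1⟩)]
    · rw [if_neg h, LinearMap.zero_apply, if_neg (fun hx => h hx.2.2.2)]
  rw [Finset.sum_congr rfl hterm]
  by_cases hP : A % 2 = δ % 2 ∧ C = ε ∧ r * (A - δ) + B = d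
  · obtain ⟨h1, h2, h3⟩ := hP
    have hA2 : A = 2 * ((A - δ)/2) + δ := by omega
    set s0 := (A - δ)/2 with hs0
    have h2rs : 2 * r * s0 = r * (A - δ) := by
      calc 2 * r * s0 = r * (2 * s0) := by ring
      _ = r * (A - δ) := by congr 1; omega
    have hle : 2 * r * s0 ≤ d := by rw [h2rs]; omega
    have hmem : s0 ∈ Finset.range (d + 1) := by
      have hAd : A - δ ≤ r * (A - δ) := Nat.le_mul_of_pos_left _ hr
      refine Finset.mem_range.2 ?_
      omega
    rw [Finset.sum_eq_single_of_mem s0 hmem, if_pos ⟨by omega, by rw [h2rs]; omega, h2, hle⟩,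
      if_pos ⟨h1, h2, h3⟩]
    intro s _ hne
    rw [if_neg]
    rintro ⟨hA, -⟩
    exact hne (by omega)
  · rw [if_neg hP, Finset.sum_eq_zero]
    intro s _
    rw [if_neg]
    rintro ⟨hA, hB, hC, hle⟩
    apply hP
    have h2rs : 2 * r * s = r * (A - δ) := by
      calc 2 * r * s = r * (2 * s) := by ring
      _ = r * (A - δ) := by congr 1; omega
    refine ⟨by omega, hC, ?_⟩
    rw [← h2rs]; omega

lemma extra_mono (mm : ℕ) (c : k) (d A B C : ℕ) :
    extra k mm c d (mono A B C) = if d = mm ∧ A = 2 ∧ B = 0 ∧ C = 0 then c else 0 := by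
  rw [extra]
  by_cases h : d = mm
  · rw [if_pos h, LinearMap.smul_apply, lcoeff_apply, coeff_mono]
    by_cases h2 : A = 2 ∧ B = 0 ∧ C = 0
    · rw [if_pos h2, if_pos ⟨h, h2.1, h2.2.1, h2.2.2⟩, smul_eq_mul, mul_one]
    · rw [if_neg h2, if_neg (fun hx => h2 ⟨hx.2.1, hx.2.2.1, hx.2.2.2⟩), smul_eq_mul, mul_zero]
  · rw [if_neg h, LinearMap.zero_apply, if_neg (fun hx => h hx.1)]

/-! ### The ideal -/

variable (k) in
noncomputable def G4 (r mm : ℕ) (c : k) : MvPolynomial (Fin 3) k :=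
  X 0 ^ 2 + X 1 ^ (2*r) + C c * (X 0 * X 1 ^ mm * X 2)

variable (k) in
noncomputable def Jid (r mm : ℕ) (c : k) : Ideal (MvPolynomial (Fin 3) k) :=
  Ideal.span {X 2 ^ 2, X 1 ^ (mm+1) * X 2, X 0 * X 1 ^ (mm+1), G4 k r mm c}

lemma mem_J {r mm : ℕ} {c : k} {f : MvPolynomial (Fin 3) k} (hf : f ∈ Jid k r mm c) :
    ∃ p1 p2 p3 p4 : MvPolynomial (Fin 3) k,
      f = p1 * (X 2 ^ 2) + p2 * (X 1 ^ (mm+1) * X 2) + p3 * (X 0 * X 1 ^ (mm+1))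
          + p4 * G4 k r mm c := by
  rw [Jid] at hf
  obtain ⟨p1, f1, hf1, rfl⟩ := Submodule.mem_span_insert.1 hf
  obtain ⟨p2, f2, hf2, rfl⟩ := Submodule.mem_span_insert.1 hf1
  obtain ⟨p3, f3, hf3, rfl⟩ := Submodule.mem_span_insert.1 hf2
  obtain ⟨p4, rfl⟩ := Ideal.mem_span_singleton.1 hf3
  exact ⟨p1, p2, p3, p4, by rw [smul_eq_mul, smul_eq_mul, smul_eq_mul, mul_comm (G4 k r mm c)]; ring⟩

lemma vanish_mul (L : MvPolynomial (Fin 3) k →ₗ[k] k) (g : MvPolynomial (Fin 3) k)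
    (h : ∀ A B C, L ((X 0 ^ A * X 1 ^ B * X 2 ^ C) * g) = 0) (p : MvPolynomial (Fin 3) k) :
    L (p * g) = 0 := by
  induction p using MvPolynomial.induction_on' with
  | monomial u a =>
      rw [monomial_eq_smul, smul_mul_assoc, map_smul, h, smul_zero]
  | add p q hp hq => rw [add_mul, map_add, hp, hq, add_zero]



/-! ### Vanishing of the functionals on `Jid` -/

section kill

variable {r mm δ ε d : ℕ} {c : k}

lemma kill1 (hr : 1 ≤ r) (hδ : δ ≤ 1) (hε : ε ≤ 1) (p : MvPolynomial (Fin 3) k) :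
    lamG k r δ ε d (p * X 2 ^ 2) = 0 := by
  refine vanish_mul _ _ (fun A B C => ?_) p
  have hp : (X 0 ^ A * X 1 ^ B * X 2 ^ C) * (X 2 : MvPolynomial (Fin 3) k) ^ 2
      = X 0 ^ A * X 1 ^ B * X 2 ^ (C+2) := by ring
  rw [hp, X_pows, lamG_mono hr hδ]
  rw [if_neg]; rintro ⟨-, h, -⟩; omega

lemma kill2 (hr : 1 ≤ r) (hδ : δ ≤ 1) (hε : ε ≤ 1) (hd : ε = 1 → d < mm + 1)
    (p : MvPolynomial (Fin 3) k) :
    lamG k r δ ε d (p * (X 1 ^ (mm+1) * X 2)) = 0 := by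
  refine vanish_mul _ _ (fun A B C => ?_) p
  have hp : (X 0 ^ A * X 1 ^ B * X 2 ^ C) * ((X 1 : MvPolynomial (Fin 3) k) ^ (mm+1) * X 2)
      = X 0 ^ A * X 1 ^ (B + (mm+1)) * X 2 ^ (C+1) := by ring
  rw [hp, X_pows, lamG_mono hr hδ]
  rw [if_neg]; rintro ⟨-, h1, h2⟩
  have hε1 : ε = 1 := by omega
  have hd' := hd hε1
  omega

lemma kill3 (hr : 1 ≤ r) (hδ : δ ≤ 1) (hε : ε ≤ 1) (hdb : d < mm + 1 + 2*r)
    (hd : 1 ≤ δ + ε → d < mm + 1) (p : MvPolynomial (Fin 3) k) :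
    lamG k r δ ε d (p * (X 0 * X 1 ^ (mm+1))) = 0 := by
  refine vanish_mul _ _ (fun A B C => ?_) p
  have hp : (X 0 ^ A * X 1 ^ B * X 2 ^ C) * ((X 0 : MvPolynomial (Fin 3) k) * X 1 ^ (mm+1))
      = X 0 ^ (A+1) * X 1 ^ (B + (mm+1)) * X 2 ^ C := by ring
  rw [hp, X_pows, lamG_mono hr hδ]
  rw [if_neg]; rintro ⟨h1, h2, h3⟩
  rcases Nat.eq_zero_or_pos δ with hδ0 | hδ1
  · -- δ = 0 : A+1 even, so A+1 ≥ 2 and r*(A+1) ≥ 2r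
    subst hδ0
    have hA : 2 ≤ A + 1 := by omega
    have : 2 * r ≤ r * (A + 1 - 0) := by
      rw [Nat.sub_zero]
      have : r * 2 ≤ r * (A+1) := Nat.mul_le_mul_left r hA
      omega
    rcases Nat.eq_zero_or_pos ε with hε0 | hε1
    · subst hε0; omega
    · have := hd (by omega); omega
  · -- δ = 1 : bound d < mm+1 applies
    have hδ1' : δ = 1 := by omega
    subst hδ1'
    have := hd (by omega)
    omega

lemma extra_kill1 (p : MvPolynomial (Fin 3) k) : extra k mm c d (p * X 2 ^ 2) = 0 := by
  refine vanish_mul _ _ (fun A B C => ?_) p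
  have hp : (X 0 ^ A * X 1 ^ B * X 2 ^ C) * (X 2 : MvPolynomial (Fin 3) k) ^ 2
      = X 0 ^ A * X 1 ^ B * X 2 ^ (C+2) := by ring
  rw [hp, X_pows, extra_mono]
  rw [if_neg]; rintro ⟨-, -, -, h⟩; omega

lemma extra_kill2 (p : MvPolynomial (Fin 3) k) :
    extra k mm c d (p * (X 1 ^ (mm+1) * X 2)) = 0 := by
  refine vanish_mul _ _ (fun A B C => ?_) p
  have hp : (X 0 ^ A * X 1 ^ B * X 2 ^ C) * ((X 1 : MvPolynomial (Fin 3) k) ^ (mm+1) * X 2)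
      = X 0 ^ A * X 1 ^ (B + (mm+1)) * X 2 ^ (C+1) := by ring
  rw [hp, X_pows, extra_mono]
  rw [if_neg]; rintro ⟨-, -, -, h⟩; omega

lemma extra_kill3 (p : MvPolynomial (Fin 3) k) :
    extra k mm c d (p * (X 0 * X 1 ^ (mm+1))) = 0 := by
  refine vanish_mul _ _ (fun A B C => ?_) p
  have hp : (X 0 ^ A * X 1 ^ B * X 2 ^ C) * ((X 0 : MvPolynomial (Fin 3) k) * X 1 ^ (mm+1))
      = X 0 ^ (A+1) * X 1 ^ (B + (mm+1)) * X 2 ^ C := by ring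
  rw [hp, X_pows, extra_mono]
  rw [if_neg]; rintro ⟨-, -, h, -⟩; omega

variable [CharP k 2]

lemma kill4 (hr : 1 ≤ r) (hδ : δ ≤ 1) (hε : ε ≤ 1)
    (h3 : ε = 0 ∨ (δ = 0 ∧ d < mm + 1)) (p : MvPolynomial (Fin 3) k) :
    lamG k r δ ε d (p * G4 k r mm c) = 0 := by
  refine vanish_mul _ _ (fun A B C => ?_) p
  have hp : (X 0 ^ A * X 1 ^ B * X 2 ^ C) * G4 k r mm c
      = X 0 ^ (A+2) * X 1 ^ B * X 2 ^ C + X 0 ^ A * X 1 ^ (B + 2*r) * X 2 ^ C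
        + MvPolynomial.C c * (X 0 ^ (A+1) * X 1 ^ (B + mm) * X 2 ^ (C+1)) := by
    rw [G4]; ring
  rw [hp, map_add, map_add, X_pows, X_pows, C_mul', map_smul, X_pows,
    lamG_mono hr hδ, lamG_mono hr hδ, lamG_mono hr hδ]
  -- third term vanishes
  have ht3 : (if (A+1) % 2 = δ % 2 ∧ C + 1 = ε ∧ r * (A + 1 - δ) + (B + mm) = d then (1:k) else 0)
      = 0 := by
    rw [if_neg]
    rintro ⟨h1, h2, h4⟩
    rcases h3 with h3 | ⟨h3, h3'⟩
    · omega
    · subst h3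
      rw [Nat.sub_zero] at h4
      have : A + 1 ≤ r * (A + 1) := Nat.le_mul_of_pos_left _ hr
      omega
  rw [ht3, smul_zero, add_zero]
  -- first two terms cancel
  by_cases hc : A % 2 = δ % 2 ∧ C = ε
  · have he : A + 2 - δ = (A - δ) + 2 := by omega
    have hr2 : r * (A + 2 - δ) = r * (A - δ) + 2 * r := by rw [he]; ring
    have hiff : ((A+2) % 2 = δ % 2 ∧ C = ε ∧ r * (A + 2 - δ) + B = d)
        ↔ (A % 2 = δ % 2 ∧ C = ε ∧ r * (A - δ) + (B + 2*r) = d) := by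
      constructor
      · rintro ⟨-, h2', h3'⟩; exact ⟨hc.1, h2', by omega⟩
      · rintro ⟨-, h2', h3'⟩; refine ⟨by omega, h2', by omega⟩
    rw [if_congr hiff rfl rfl]
    exact CharTwo.add_self_eq_zero _
  · rw [if_neg, if_neg, add_zero]
    · rintro ⟨h1', h2', -⟩; exact hc ⟨h1', h2'⟩
    · rintro ⟨h1', h2', -⟩; exact hc ⟨by omega, h2'⟩

lemma kill4' (hr : 1 ≤ r) (hd : d < mm + 1) (p : MvPolynomial (Fin 3) k) :
    lam4 k r mm c d (p * G4 k r mm c) = 0 := by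
  refine vanish_mul _ _ (fun A B C => ?_) p
  have hp : (X 0 ^ A * X 1 ^ B * X 2 ^ C) * G4 k r mm c
      = X 0 ^ (A+2) * X 1 ^ B * X 2 ^ C + X 0 ^ A * X 1 ^ (B + 2*r) * X 2 ^ C
        + MvPolynomial.C c * (X 0 ^ (A+1) * X 1 ^ (B + mm) * X 2 ^ (C+1)) := by
    rw [G4]; ring
  have e1 : lam4 k r mm c d (X 0 ^ (A+2) * X 1 ^ B * X 2 ^ C)
      = (if (A+2) % 2 = 1 % 2 ∧ C = 1 ∧ r * (A + 2 - 1) + B = d then (1:k) else 0)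
        + (if d = mm ∧ A + 2 = 2 ∧ B = 0 ∧ C = 0 then c else 0) := by
    rw [X_pows, lam4, LinearMap.add_apply, lamG_mono hr (le_refl 1), extra_mono]
  have e2 : lam4 k r mm c d (X 0 ^ A * X 1 ^ (B + 2*r) * X 2 ^ C)
      = (if A % 2 = 1 % 2 ∧ C = 1 ∧ r * (A - 1) + (B + 2*r) = d then (1:k) else 0) := by
    rw [X_pows, lam4, LinearMap.add_apply, lamG_mono hr (le_refl 1), extra_mono]
    rw [if_neg (show ¬(d = mm ∧ A = 2 ∧ B + 2*r = 0 ∧ C = 0) by rintro ⟨-, -, h, -⟩; omega),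
      add_zero]
  have e3 : lam4 k r mm c d (X 0 ^ (A+1) * X 1 ^ (B + mm) * X 2 ^ (C+1))
      = (if d = mm ∧ A + 2 = 2 ∧ B = 0 ∧ C = 0 then (1:k) else 0) := by
    rw [X_pows, lam4, LinearMap.add_apply, lamG_mono hr (le_refl 1), extra_mono]
    rw [if_neg (by rintro ⟨-, -, -, h⟩; omega : ¬(d = mm ∧ A + 1 = 2 ∧ B + mm = 0 ∧ C + 1 = 0)),
      add_zero]
    congr 1
    have hAr : A ≤ r * A := Nat.le_mul_of_pos_left _ hr
    have hA1 : A + 1 - 1 = A := by omega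
    rw [hA1]
    apply propext
    constructor
    · rintro ⟨h1', h2', h3'⟩; omega
    · rintro ⟨h1', h2', h3', h4'⟩
      have hA0 : A = 0 := by omega
      subst hA0
      refine ⟨by omega, by omega, ?_⟩
      rw [Nat.mul_zero, Nat.zero_add]
      omega
  have hiff : ((A+2) % 2 = 1 % 2 ∧ C = 1 ∧ r * (A + 2 - 1) + B = d)
      ↔ (A % 2 = 1 % 2 ∧ C = 1 ∧ r * (A - 1) + (B + 2*r) = d) := by
    constructor
    · rintro ⟨h1', h2', h3'⟩
      have he : A + 2 - 1 = (A - 1) + 2 ∨ (A + 2) % 2 ≠ 1 % 2 := by omega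
      refine ⟨by omega, h2', ?_⟩
      have he' : A + 2 - 1 = (A - 1) + 2 := by omega
      have : r * (A + 2 - 1) = r * (A - 1) + 2 * r := by rw [he']; ring
      omega
    · rintro ⟨h1', h2', h3'⟩
      have he' : A + 2 - 1 = (A - 1) + 2 := by omega
      have : r * (A + 2 - 1) = r * (A - 1) + 2 * r := by rw [he']; ring
      exact ⟨by omega, h2', by omega⟩
  rw [hp, map_add, map_add, C_mul', map_smul, e1, e2, e3, if_congr hiff rfl rfl]
  by_cases hq : d = mm ∧ A + 2 = 2 ∧ B = 0 ∧ C = 0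
  · rw [if_pos hq, if_pos hq, smul_eq_mul, mul_one]
    linear_combination CharTwo.add_self_eq_zero
        (if A % 2 = 1 % 2 ∧ C = 1 ∧ r * (A - 1) + (B + 2*r) = d then (1:k) else 0)
      + CharTwo.add_self_eq_zero c
  · rw [if_neg hq, if_neg hq, smul_zero, add_zero, add_zero]
    exact CharTwo.add_self_eq_zero _

end kill


/-! ### The functionals vanish on `Jid` -/

section vanJ
variable {r mm d : ℕ} {c : k} [CharP k 2]

lemma lamJ00 (hr : 1 ≤ r) (hd : d < mm + 1 + 2*r) {f : MvPolynomial (Fin 3) k}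
    (hf : f ∈ Jid k r mm c) : lamG k r 0 0 d f = 0 := by
  obtain ⟨p1, p2, p3, p4, rfl⟩ := mem_J hf
  rw [map_add, map_add, map_add, kill1 hr (by omega) (by omega),
    kill2 hr (by omega) (by omega) (fun h => absurd h (by omega)),
    kill3 hr (by omega) (by omega) hd (fun h => absurd h (by omega)),
    kill4 hr (by omega) (by omega) (Or.inl rfl)]
  simp

lemma lamJ10 (hr : 1 ≤ r) (hd : d < mm + 1) {f : MvPolynomial (Fin 3) k}
    (hf : f ∈ Jid k r mm c) : lamG k r 1 0 d f = 0 := by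
  obtain ⟨p1, p2, p3, p4, rfl⟩ := mem_J hf
  rw [map_add, map_add, map_add, kill1 hr (by omega) (by omega),
    kill2 hr (by omega) (by omega) (fun h => absurd h (by omega)),
    kill3 hr (by omega) (by omega) (by omega) (fun _ => hd),
    kill4 hr (by omega) (by omega) (Or.inl rfl)]
  simp

lemma lamJ01 (hr : 1 ≤ r) (hd : d < mm + 1) {f : MvPolynomial (Fin 3) k}
    (hf : f ∈ Jid k r mm c) : lamG k r 0 1 d f = 0 := by
  obtain ⟨p1, p2, p3, p4, rfl⟩ := mem_J hf
  rw [map_add, map_add, map_add, kill1 hr (by omega) (by omega),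
    kill2 hr (by omega) (by omega) (fun _ => hd),
    kill3 hr (by omega) (by omega) (by omega) (fun _ => hd),
    kill4 hr (by omega) (by omega) (Or.inr ⟨rfl, hd⟩)]
  simp

lemma lamJ4 (hr : 1 ≤ r) (hd : d < mm + 1) {f : MvPolynomial (Fin 3) k}
    (hf : f ∈ Jid k r mm c) : lam4 k r mm c d f = 0 := by
  obtain ⟨p1, p2, p3, p4, rfl⟩ := mem_J hf
  have h1 : lam4 k r mm c d (p1 * X 2 ^ 2) = 0 := by
    rw [lam4, LinearMap.add_apply, kill1 hr (by omega) (by omega), extra_kill1, add_zero]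
  have h2 : lam4 k r mm c d (p2 * (X 1 ^ (mm+1) * X 2)) = 0 := by
    rw [lam4, LinearMap.add_apply, kill2 hr (by omega) (by omega) (fun _ => hd), extra_kill2,
      add_zero]
  have h3 : lam4 k r mm c d (p3 * (X 0 * X 1 ^ (mm+1))) = 0 := by
    rw [lam4, LinearMap.add_apply, kill3 hr (by omega) (by omega) (by omega) (fun _ => hd),
      extra_kill3, add_zero]
  rw [map_add, map_add, map_add, h1, h2, h3, kill4' hr hd]
  simp

end vanJ

/-! ### simple evaluations of the functionals on small monomials -/

section evalsmall
variable {r mm : ℕ} {c : k}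

lemma lamG_mono_small (hr : 1 ≤ r) {δ δ' : ℕ} (hδ : δ ≤ 1) (hδ' : δ' ≤ 1) (ε d d' ε' : ℕ) :
    lamG k r δ ε d (mono δ' d' ε') = if δ' = δ ∧ ε' = ε ∧ d' = d then 1 else 0 := by
  rw [lamG_mono hr hδ]
  apply if_congr _ rfl rfl
  constructor
  · rintro ⟨h1, h2, h3⟩
    have hδδ : δ' = δ := by omega
    subst hδδ
    rw [Nat.sub_self, Nat.mul_zero, Nat.zero_add] at h3
    exact ⟨rfl, h2, h3⟩
  · rintro ⟨rfl, h2, h3⟩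
    rw [Nat.sub_self, Nat.mul_zero, Nat.zero_add]
    exact ⟨rfl, h2, h3⟩

lemma lam4_mono_small (hr : 1 ≤ r) {δ' : ℕ} (hδ' : δ' ≤ 1) (d d' ε' : ℕ) :
    lam4 k r mm c d (mono δ' d' ε') = if δ' = 1 ∧ ε' = 1 ∧ d' = d then 1 else 0 := by
  rw [lam4, LinearMap.add_apply, lamG_mono_small hr (by omega) hδ', extra_mono,
    if_neg (by rintro ⟨-, h, -⟩; omega : ¬(d = mm ∧ δ' = 2 ∧ d' = 0 ∧ ε' = 0)), add_zero]

end evalsmall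


/-! ### The comparison space and maps -/

section maps
variable (r mm : ℕ) (c : k)

variable (k) in
abbrev Wsp (r mm : ℕ) : Type _ :=
  (Fin (mm+1+2*r) → k) × ((Fin (mm+1) → k) × ((Fin (mm+1) → k) × (Fin (mm+1) → k)))

variable (k) in
noncomputable def Lam : MvPolynomial (Fin 3) k →ₗ[k] Wsp k r mm :=
  (LinearMap.pi fun d : Fin (mm+1+2*r) => lamG k r 0 0 (d : ℕ)).prod
    ((LinearMap.pi fun d : Fin (mm+1) => lamG k r 1 0 (d : ℕ)).prod
      ((LinearMap.pi fun d : Fin (mm+1) => lamG k r 0 1 (d : ℕ)).prod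
        (LinearMap.pi fun d : Fin (mm+1) => lam4 k r mm c (d : ℕ))))

variable (k) in
noncomputable def Psi0 : Wsp k r mm →ₗ[k] MvPolynomial (Fin 3) k :=
  LinearMap.coprod ((Pi.basisFun k (Fin (mm+1+2*r))).constr k fun d => mono 0 (d : ℕ) 0)
    (LinearMap.coprod ((Pi.basisFun k (Fin (mm+1))).constr k fun d => mono 1 (d : ℕ) 0)
      (LinearMap.coprod ((Pi.basisFun k (Fin (mm+1))).constr k fun d => mono 0 (d : ℕ) 1)
        ((Pi.basisFun k (Fin (mm+1))).constr k fun d => mono 1 (d : ℕ) 1)))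

lemma Psi0_apply (w : Wsp k r mm) :
    Psi0 k r mm w = (∑ d, w.1 d • mono 0 (d : ℕ) 0)
      + ((∑ d, w.2.1 d • mono 1 (d : ℕ) 0)
        + ((∑ d, w.2.2.1 d • mono 0 (d : ℕ) 1) + (∑ d, w.2.2.2 d • mono 1 (d : ℕ) 1))) := by
  rw [Psi0, LinearMap.coprod_apply, LinearMap.coprod_apply, LinearMap.coprod_apply,
    Module.Basis.constr_apply_fintype, Module.Basis.constr_apply_fintype, Module.Basis.constr_apply_fintype,
    Module.Basis.constr_apply_fintype]
  simp [Pi.basisFun_equivFun]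

lemma Lsum {N : ℕ} (L : MvPolynomial (Fin 3) k →ₗ[k] k) (w : Fin N → k)
    (v : Fin N → MvPolynomial (Fin 3) k) :
    L (∑ d', w d' • v d') = ∑ d', w d' * L (v d') := by
  rw [map_sum]
  exact Finset.sum_congr rfl fun d' _ => by rw [map_smul, smul_eq_mul]

lemma sum_delta {N : ℕ} (w : Fin N → k) (d : Fin N) :
    (∑ d' : Fin N, if (d' : ℕ) = (d : ℕ) then w d' else 0) = w d := by
  rw [Finset.sum_eq_single d]
  · rw [if_pos rfl]
  · intro b _ hne
    rw [if_neg (fun h => hne (Fin.val_injective h))]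
  · intro h
    exact absurd (Finset.mem_univ d) h

lemma leftinv (hr : 1 ≤ r) (w : Wsp k r mm) : Lam k r mm c (Psi0 k r mm w) = w := by
  have l0 : (0:ℕ) ≤ 1 := by norm_num
  have l1 : (1:ℕ) ≤ 1 := le_refl 1
  rw [Psi0_apply]
  refine Prod.ext ?_ (Prod.ext ?_ (Prod.ext ?_ ?_))
  · show LinearMap.pi (fun d : Fin (mm+1+2*r) => lamG k r 0 0 (d : ℕ)) _ = w.1
    funext d
    rw [LinearMap.pi_apply, map_add, map_add, map_add, Lsum, Lsum, Lsum, Lsum]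
    simp only [lamG_mono_small hr l0 l0, lamG_mono_small hr l0 l1]
    norm_num
    exact sum_delta w.1 d
  · show LinearMap.pi (fun d : Fin (mm+1) => lamG k r 1 0 (d : ℕ)) _ = w.2.1
    funext d
    rw [LinearMap.pi_apply, map_add, map_add, map_add, Lsum, Lsum, Lsum, Lsum]
    simp only [lamG_mono_small hr l1 l0, lamG_mono_small hr l1 l1]
    norm_num
    exact sum_delta w.2.1 d
  · show LinearMap.pi (fun d : Fin (mm+1) => lamG k r 0 1 (d : ℕ)) _ = w.2.2.1
    funext d
    rw [LinearMap.pi_apply, map_add, map_add, map_add, Lsum, Lsum, Lsum, Lsum]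
    simp only [lamG_mono_small hr l0 l0, lamG_mono_small hr l0 l1]
    norm_num
    exact sum_delta w.2.2.1 d
  · show LinearMap.pi (fun d : Fin (mm+1) => lam4 k r mm c (d : ℕ)) _ = w.2.2.2
    funext d
    rw [LinearMap.pi_apply, map_add, map_add, map_add, Lsum, Lsum, Lsum, Lsum]
    simp only [lam4_mono_small hr l0, lam4_mono_small hr l1]
    norm_num
    exact sum_delta w.2.2.2 d

end maps

/-! ### Spanning -/

section span
variable {r mm : ℕ} {c : k}

lemma g1_mem : (X 2 ^ 2 : MvPolynomial (Fin 3) k) ∈ Jid k r mm c :=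
  Ideal.subset_span (by simp [Set.mem_insert_iff])

lemma g2_mem : (X 1 ^ (mm+1) * X 2 : MvPolynomial (Fin 3) k) ∈ Jid k r mm c :=
  Ideal.subset_span (by simp [Set.mem_insert_iff])

lemma g3_mem : (X 0 * X 1 ^ (mm+1) : MvPolynomial (Fin 3) k) ∈ Jid k r mm c :=
  Ideal.subset_span (by simp [Set.mem_insert_iff])

lemma g4_mem : G4 k r mm c ∈ Jid k r mm c :=
  Ideal.subset_span (by simp [Set.mem_insert_iff])

lemma big_y_mem : (X 1 ^ (mm+1+2*r) : MvPolynomial (Fin 3) k) ∈ Jid k r mm c := by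
  have hid : (X 1 : MvPolynomial (Fin 3) k) ^ (mm+1+2*r)
      = X 1 ^ (mm+1) * G4 k r mm c - X 0 * (X 0 * X 1 ^ (mm+1))
        - MvPolynomial.C c * (X 1 ^ mm * X 2 * (X 0 * X 1 ^ (mm+1))) := by
    rw [G4]; ring
  rw [hid]
  exact sub_mem (sub_mem (Ideal.mul_mem_left _ _ g4_mem) (Ideal.mul_mem_left _ _ g3_mem))
    (Ideal.mul_mem_left _ _ (Ideal.mul_mem_left _ _ g3_mem))

end span


section spanning
variable {r mm : ℕ} {c : k}

variable (k r mm c) in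
/-- abbreviation for the scalar-restricted ideal -/
noncomputable def pJ : Submodule k (MvPolynomial (Fin 3) k) :=
  (Jid k r mm c).restrictScalars k

variable (k r mm c) in
noncomputable def Psi : Wsp k r mm →ₗ[k] (MvPolynomial (Fin 3) k ⧸ pJ k r mm c) :=
  (pJ k r mm c).mkQ.comp (Psi0 k r mm)

lemma mkQ_eq_zero {f : MvPolynomial (Fin 3) k} (hf : f ∈ Jid k r mm c) :
    (pJ k r mm c).mkQ f = 0 := by
  rw [Submodule.mkQ_apply, Submodule.Quotient.mk_eq_zero]
  exact hf

lemma basis_mem (δ ε : ℕ) (N : ℕ) (B : ℕ) (hB : B < N)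
    (hv : ∀ e : Fin N, ∃ w : Wsp k r mm, Psi0 k r mm w = mono δ (e : ℕ) ε) :
    (pJ k r mm c).mkQ (mono δ B ε) ∈ LinearMap.range (Psi k r mm c) := by
  obtain ⟨w, hw⟩ := hv ⟨B, hB⟩
  exact ⟨w, by rw [Psi, LinearMap.comp_apply, hw]⟩

lemma mono_mem_range (hr : 1 ≤ r) (A : ℕ) : ∀ B C : ℕ,
    (pJ k r mm c).mkQ (mono A B C) ∈ LinearMap.range (Psi k r mm c) := by
  induction A using Nat.strong_induction_on with
  | _ A IH =>
  intro B C
  match C with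
  | (C'' + 2) =>
      have hid : (mono A B (C''+2) : MvPolynomial (Fin 3) k)
          = (X 0 ^ A * X 1 ^ B * X 2 ^ C'') * (X 2 ^ 2) := by rw [← X_pows]; ring
      rw [hid, mkQ_eq_zero (Ideal.mul_mem_left _ _ g1_mem)]
      exact zero_mem _
  | 1 =>
      by_cases hB : B < mm + 1
      · match A with
        | 0 =>
            refine basis_mem 0 1 (mm+1) B hB (fun e => ⟨(0, (0, (Pi.basisFun k _ e, 0))), ?_⟩)
            rw [Psi0, LinearMap.coprod_apply, LinearMap.coprod_apply, LinearMap.coprod_apply,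
              map_zero, map_zero, map_zero, Module.Basis.constr_basis]
            simp
        | 1 =>
            refine basis_mem 1 1 (mm+1) B hB (fun e => ⟨(0, (0, (0, Pi.basisFun k _ e))), ?_⟩)
            rw [Psi0, LinearMap.coprod_apply, LinearMap.coprod_apply, LinearMap.coprod_apply,
              map_zero, map_zero, map_zero, Module.Basis.constr_basis]
            simp
        | (A'' + 2) =>
            have hid : (mono (A''+2) B 1 : MvPolynomial (Fin 3) k)
                = (X 0 ^ A'' * X 1 ^ B * X 2) * G4 k r mm c
                  - mono A'' (B + 2*r) 1
                  - MvPolynomial.C c * ((X 0 ^ (A''+1) * X 1 ^ (B+mm) * X 2 ^ 0) * X 2 ^ 2) := by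
              rw [← X_pows, ← X_pows, G4]; ring
            rw [hid, map_sub, map_sub, C_mul', map_smul,
              mkQ_eq_zero (Ideal.mul_mem_left _ _ g4_mem),
              mkQ_eq_zero (Ideal.mul_mem_left _ _ g1_mem), smul_zero, sub_zero, zero_sub]
            exact neg_mem (IH A'' (by omega) (B + 2*r) 1)
      · obtain ⟨B', rfl⟩ : ∃ B', B = B' + (mm+1) := ⟨B - (mm+1), by omega⟩
        have hid : (mono A (B' + (mm+1)) 1 : MvPolynomial (Fin 3) k)
            = (X 0 ^ A * X 1 ^ B' * X 2 ^ 0) * (X 1 ^ (mm+1) * X 2) := by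
          rw [← X_pows]; ring
        rw [hid, mkQ_eq_zero (Ideal.mul_mem_left _ _ g2_mem)]
        exact zero_mem _
  | 0 =>
      match A with
      | 0 =>
          by_cases hB : B < mm + 1 + 2*r
          · refine basis_mem 0 0 (mm+1+2*r) B hB (fun e => ⟨(Pi.basisFun k _ e, 0), ?_⟩)
            rw [Psi0, LinearMap.coprod_apply, map_zero, Module.Basis.constr_basis, add_zero]
          · obtain ⟨B', rfl⟩ : ∃ B', B = B' + (mm+1+2*r) := ⟨B - (mm+1+2*r), by omega⟩
            have hid : (mono 0 (B' + (mm+1+2*r)) 0 : MvPolynomial (Fin 3) k)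
                = (X 0 ^ 0 * X 1 ^ B' * X 2 ^ 0) * (X 1 ^ (mm+1+2*r)) := by
              rw [← X_pows]; ring
            rw [hid, mkQ_eq_zero (Ideal.mul_mem_left _ _ big_y_mem)]
            exact zero_mem _
      | 1 =>
          by_cases hB : B < mm + 1
          · refine basis_mem 1 0 (mm+1) B hB (fun e => ⟨(0, (Pi.basisFun k _ e, 0)), ?_⟩)
            rw [Psi0, LinearMap.coprod_apply, LinearMap.coprod_apply, map_zero, map_zero,
              Module.Basis.constr_basis]
            simp
          · obtain ⟨B', rfl⟩ : ∃ B', B = B' + (mm+1) := ⟨B - (mm+1), by omega⟩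
            have hid : (mono 1 (B' + (mm+1)) 0 : MvPolynomial (Fin 3) k)
                = (X 0 ^ 0 * X 1 ^ B' * X 2 ^ 0) * (X 0 * X 1 ^ (mm+1)) := by
              rw [← X_pows]; ring
            rw [hid, mkQ_eq_zero (Ideal.mul_mem_left _ _ g3_mem)]
            exact zero_mem _
      | (A'' + 2) =>
          have hid : (mono (A''+2) B 0 : MvPolynomial (Fin 3) k)
              = (X 0 ^ A'' * X 1 ^ B * X 2 ^ 0) * G4 k r mm c
                - mono A'' (B + 2*r) 0 - MvPolynomial.C c * mono (A''+1) (B+mm) 1 := by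
            rw [← X_pows, ← X_pows, ← X_pows, G4]; ring
          rw [hid, map_sub, map_sub, C_mul', map_smul,
            mkQ_eq_zero (Ideal.mul_mem_left _ _ g4_mem), zero_sub]
          exact sub_mem (neg_mem (IH A'' (by omega) (B + 2*r) 0))
            (Submodule.smul_mem _ c (IH (A''+1) (by omega) (B+mm) 1))

lemma range_psi_top (hr : 1 ≤ r) : LinearMap.range (Psi k r mm c) = ⊤ := by
  rw [eq_top_iff]
  rintro q -
  obtain ⟨f, rfl⟩ := (pJ k r mm c).mkQ_surjective q
  induction f using MvPolynomial.induction_on' with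
  | monomial u a =>
      rw [monomial_eq_smul, X_pows, map_smul]
      exact Submodule.smul_mem _ _ (mono_mem_range hr (u 0) (u 1) (u 2))
  | add p q hp hq =>
      rw [map_add]
      exact add_mem hp hq

end spanning


/-! ### Main dimension lemma -/

theorem Jdim [CharP k 2] (r mm : ℕ) (hr : 1 ≤ r) (c : k) :
    FiniteDimensional k (MvPolynomial (Fin 3) k ⧸ Jid k r mm c) ∧
      Module.finrank k (MvPolynomial (Fin 3) k ⧸ Jid k r mm c) = 4*(mm+1) + 2*r := by
  have hker : pJ k r mm c ≤ LinearMap.ker (Lam k r mm c) := by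
    intro f hf
    have hfJ : f ∈ Jid k r mm c := hf
    rw [LinearMap.mem_ker]
    refine Prod.ext ?_ (Prod.ext ?_ (Prod.ext ?_ ?_))
    · show LinearMap.pi (fun d : Fin (mm+1+2*r) => lamG k r 0 0 (d : ℕ)) f = 0
      funext d
      rw [LinearMap.pi_apply, lamJ00 hr d.isLt hfJ]
      rfl
    · show LinearMap.pi (fun d : Fin (mm+1) => lamG k r 1 0 (d : ℕ)) f = 0
      funext d
      rw [LinearMap.pi_apply, lamJ10 hr d.isLt hfJ]
      rfl
    · show LinearMap.pi (fun d : Fin (mm+1) => lamG k r 0 1 (d : ℕ)) f = 0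
      funext d
      rw [LinearMap.pi_apply, lamJ01 hr d.isLt hfJ]
      rfl
    · show LinearMap.pi (fun d : Fin (mm+1) => lam4 k r mm c (d : ℕ)) f = 0
      funext d
      rw [LinearMap.pi_apply, lamJ4 hr d.isLt hfJ]
      rfl
  set Lam' : (MvPolynomial (Fin 3) k ⧸ pJ k r mm c) →ₗ[k] Wsp k r mm :=
    (pJ k r mm c).liftQ (Lam k r mm c) hker with hLam'
  have hLI : Function.LeftInverse Lam' (Psi k r mm c) := by
    intro w
    rw [Psi, LinearMap.comp_apply, Submodule.mkQ_apply, hLam', Submodule.liftQ_apply]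
    exact leftinv r mm c hr w
  have hBij : Function.Bijective (Psi k r mm c) := by
    constructor
    · exact hLI.injective
    · rw [← LinearMap.range_eq_top]
      exact range_psi_top hr
  let eqv : Wsp k r mm ≃ₗ[k] (MvPolynomial (Fin 3) k ⧸ pJ k r mm c) :=
    LinearEquiv.ofBijective (Psi k r mm c) hBij
  let eqv2 : (MvPolynomial (Fin 3) k ⧸ pJ k r mm c) ≃ₗ[k]
      (MvPolynomial (Fin 3) k ⧸ Jid k r mm c) :=
    Submodule.Quotient.restrictScalarsEquiv k ((Jid k r mm c) : Submodule (MvPolynomial (Fin 3) k) (MvPolynomial (Fin 3) k))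
  let eqv3 : Wsp k r mm ≃ₗ[k] (MvPolynomial (Fin 3) k ⧸ Jid k r mm c) := eqv.trans eqv2
  constructor
  · exact Module.Finite.equiv eqv3
  · rw [← eqv3.finrank_eq]
    simp only [Module.finrank_prod, Module.finrank_fin_fun]
    ring


/-! ### Outer reduction: change of variables and pderiv computation -/

section outer
variable [CharP k 2]

noncomputable def Fsub (r : ℕ) : MvPolynomial (Fin 3) k →ₐ[k] MvPolynomial (Fin 3) k :=
  aeval ![X 0 + X 1 ^ r, X 1, X 2]

lemma Fsub_X0 {r : ℕ} : Fsub r (X 0 : MvPolynomial (Fin 3) k) = X 0 + X 1 ^ r := by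
  rw [Fsub, aeval_X]; rfl

lemma Fsub_X1 {r : ℕ} : Fsub r (X 1 : MvPolynomial (Fin 3) k) = X 1 := by
  rw [Fsub, aeval_X]; rfl

lemma Fsub_X2 {r : ℕ} : Fsub r (X 2 : MvPolynomial (Fin 3) k) = X 2 := by
  rw [Fsub, aeval_X]; rfl

lemma Fsub_invol (r : ℕ) :
    (Fsub r : MvPolynomial (Fin 3) k →ₐ[k] _).comp (Fsub r) = AlgHom.id k _ := by
  apply MvPolynomial.algHom_ext
  intro i
  fin_cases i
  · show Fsub r (Fsub r (X 0 : MvPolynomial (Fin 3) k)) = X 0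
    rw [Fsub_X0, map_add, Fsub_X0, map_pow, Fsub_X1]
    linear_combination CharTwo.add_self_eq_zero (R := MvPolynomial (Fin 3) k) (X 1 ^ r)
  · show Fsub r (Fsub r (X 1 : MvPolynomial (Fin 3) k)) = X 1
    rw [Fsub_X1, Fsub_X1]
  · show Fsub r (Fsub r (X 2 : MvPolynomial (Fin 3) k)) = X 2
    rw [Fsub_X2, Fsub_X2]

noncomputable def phi (r : ℕ) : MvPolynomial (Fin 3) k ≃ₐ[k] MvPolynomial (Fin 3) k :=
  AlgEquiv.ofAlgHom (Fsub r) (Fsub r) (Fsub_invol r) (Fsub_invol r)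

lemma phi_apply (r : ℕ) (f : MvPolynomial (Fin 3) k) : phi r f = Fsub r f := rfl

set_option maxHeartbeats 1000000 in
theorem outer (r' mm : ℕ) :
    FiniteDimensional k (MvPolynomial (Fin 3) k ⧸
      Ideal.span {(X 2 ^ 2 + X 0 ^ 2 * X 1 + X 1 ^ (mm+1+(r'+1)) * X 2
          + X 0 * X 1 ^ (mm+1) * X 2 : MvPolynomial (Fin 3) k),
        pderiv 0 (X 2 ^ 2 + X 0 ^ 2 * X 1 + X 1 ^ (mm+1+(r'+1)) * X 2 + X 0 * X 1 ^ (mm+1) * X 2),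
        pderiv 1 (X 2 ^ 2 + X 0 ^ 2 * X 1 + X 1 ^ (mm+1+(r'+1)) * X 2 + X 0 * X 1 ^ (mm+1) * X 2),
        pderiv 2 (X 2 ^ 2 + X 0 ^ 2 * X 1 + X 1 ^ (mm+1+(r'+1)) * X 2
          + X 0 * X 1 ^ (mm+1) * X 2)}) ∧
    Module.finrank k (MvPolynomial (Fin 3) k ⧸
      Ideal.span {(X 2 ^ 2 + X 0 ^ 2 * X 1 + X 1 ^ (mm+1+(r'+1)) * X 2
          + X 0 * X 1 ^ (mm+1) * X 2 : MvPolynomial (Fin 3) k),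
        pderiv 0 (X 2 ^ 2 + X 0 ^ 2 * X 1 + X 1 ^ (mm+1+(r'+1)) * X 2 + X 0 * X 1 ^ (mm+1) * X 2),
        pderiv 1 (X 2 ^ 2 + X 0 ^ 2 * X 1 + X 1 ^ (mm+1+(r'+1)) * X 2 + X 0 * X 1 ^ (mm+1) * X 2),
        pderiv 2 (X 2 ^ 2 + X 0 ^ 2 * X 1 + X 1 ^ (mm+1+(r'+1)) * X 2
          + X 0 * X 1 ^ (mm+1) * X 2)}) = 4*(mm+1) + 2*(r'+1) := by
  set r := r' + 1 with hrdef
  set Pp : MvPolynomial (Fin 3) k :=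
    X 2 ^ 2 + X 0 ^ 2 * X 1 + X 1 ^ (mm+1+r) * X 2 + X 0 * X 1 ^ (mm+1) * X 2 with hPp
  set bb : Ideal (MvPolynomial (Fin 3) k) :=
    Ideal.span {Pp, pderiv 0 Pp, pderiv 1 Pp, pderiv 2 Pp} with hbb
  have h2' : (2 : MvPolynomial (Fin 3) k) = 0 := CharTwo.two_eq_zero
  have h2A : ((2:ℕ) : MvPolynomial (Fin 3) k) = 0 := by rw [Nat.cast_ofNat]; exact h2'
  -- the partial derivatives
  have hd1 : pderiv 0 Pp = X 1 ^ (mm+1) * X 2 := by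
    rw [hPp]
    simp only [map_add, pderiv_mul, pderiv_pow, pderiv_X_self,
      pderiv_X_of_ne (show (2:Fin 3) ≠ 0 by decide), pderiv_X_of_ne (show (1:Fin 3) ≠ 0 by decide)]
    rw [h2A]; ring
  have hd2 : pderiv 1 Pp = X 0 ^ 2 + ((mm+1+r : ℕ) : MvPolynomial (Fin 3) k) * X 1 ^ (mm+r) * X 2
      + ((mm+1 : ℕ) : MvPolynomial (Fin 3) k) * (X 0 * X 1 ^ mm * X 2) := by
    rw [hPp]
    simp only [map_add, pderiv_mul, pderiv_pow, pderiv_X_self,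
      pderiv_X_of_ne (show (2:Fin 3) ≠ 1 by decide), pderiv_X_of_ne (show (0:Fin 3) ≠ 1 by decide)]
    have e1 : mm + 1 + r - 1 = mm + r := by omega
    have e2 : mm + 1 - 1 = mm := by omega
    rw [e1, e2]
    ring
  have hd3 : pderiv 2 Pp = X 1 ^ (mm+1+r) + X 0 * X 1 ^ (mm+1) := by
    rw [hPp]
    simp only [map_add, pderiv_mul, pderiv_pow, pderiv_X_self,
      pderiv_X_of_ne (show (0:Fin 3) ≠ 2 by decide), pderiv_X_of_ne (show (1:Fin 3) ≠ 2 by decide)]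
    rw [h2A]; ring
  -- images under the substitution x ↦ x + y^r
  have hA1 : Fsub r Pp
      = X 2 ^ 2 + X 0 ^ 2 * X 1 + X 1 ^ (2*r+1) + X 0 * X 1 ^ (mm+1) * X 2 := by
    rw [hPp]
    simp only [map_add, map_mul, map_pow, Fsub_X0, Fsub_X1, Fsub_X2]
    linear_combination (X 0 * X 1 ^ r * X 1 + X 1 ^ (mm+1+r) * X 2
      : MvPolynomial (Fin 3) k) * h2'
  have hA2 : Fsub r (X 1 ^ (mm+1) * X 2 : MvPolynomial (Fin 3) k) = X 1 ^ (mm+1) * X 2 := by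
    rw [map_mul, map_pow, Fsub_X1, Fsub_X2]
  have hA3 : Fsub r (X 0 ^ 2 + ((mm+1+r : ℕ) : MvPolynomial (Fin 3) k) * X 1 ^ (mm+r) * X 2
        + ((mm+1 : ℕ) : MvPolynomial (Fin 3) k) * (X 0 * X 1 ^ mm * X 2))
      = X 0 ^ 2 + X 1 ^ (2*r)
        + (((mm+1+r : ℕ) : MvPolynomial (Fin 3) k) + ((mm+1 : ℕ) : MvPolynomial (Fin 3) k))
          * X 1 ^ (mm+r) * X 2
        + ((mm+1 : ℕ) : MvPolynomial (Fin 3) k) * (X 0 * X 1 ^ mm * X 2) := by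
    simp only [map_add, map_mul, map_pow, map_natCast, Fsub_X0, Fsub_X1, Fsub_X2]
    linear_combination (X 0 * X 1 ^ r : MvPolynomial (Fin 3) k) * h2'
  have hA4 : Fsub r (X 1 ^ (mm+1+r) + X 0 * X 1 ^ (mm+1) : MvPolynomial (Fin 3) k)
      = X 0 * X 1 ^ (mm+1) := by
    simp only [map_add, map_mul, map_pow, Fsub_X0, Fsub_X1, Fsub_X2]
    linear_combination (X 1 ^ (mm+1+r) : MvPolynomial (Fin 3) k) * h2'
  -- the pushforward ideal
  set cc : k := ((mm+1 : ℕ) : k) with hcc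
  have hC : MvPolynomial.C cc = ((mm+1 : ℕ) : MvPolynomial (Fin 3) k) := by
    rw [hcc, map_natCast]
  have hmap : Ideal.map ((phi r : MvPolynomial (Fin 3) k ≃ₐ[k] _)
        : MvPolynomial (Fin 3) k →+* MvPolynomial (Fin 3) k) bb = Jid k r mm cc := by
    rw [hbb, hd1, hd2, hd3, Ideal.map_span, Set.image_insert_eq, Set.image_insert_eq,
      Set.image_insert_eq, Set.image_singleton]
    have hc0 : ∀ f : MvPolynomial (Fin 3) k,
        ((phi r : MvPolynomial (Fin 3) k ≃ₐ[k] _)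
          : MvPolynomial (Fin 3) k →+* MvPolynomial (Fin 3) k) f = Fsub r f := fun _ => rfl
    rw [hc0, hc0, hc0, hc0, hA1, hA2, hA3, hA4]
    set q : MvPolynomial (Fin 3) k :=
      ((mm+1+r : ℕ) : MvPolynomial (Fin 3) k) + ((mm+1 : ℕ) : MvPolynomial (Fin 3) k) with hq
    set A1v : MvPolynomial (Fin 3) k :=
      X 2 ^ 2 + X 0 ^ 2 * X 1 + X 1 ^ (2*r+1) + X 0 * X 1 ^ (mm+1) * X 2 with hA1v
    set A3v : MvPolynomial (Fin 3) k :=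
      X 0 ^ 2 + X 1 ^ (2*r) + q * X 1 ^ (mm+r) * X 2
        + ((mm+1 : ℕ) : MvPolynomial (Fin 3) k) * (X 0 * X 1 ^ mm * X 2) with hA3v
    rw [Jid]
    apply le_antisymm
    · rw [Ideal.span_le]
      rintro x hx
      simp only [Set.mem_insert_iff, Set.mem_singleton_iff] at hx
      have hT1 : (X 2 ^ 2 : MvPolynomial (Fin 3) k) ∈ Jid k r mm cc := g1_mem
      have hT2 : (X 1 ^ (mm+1) * X 2 : MvPolynomial (Fin 3) k) ∈ Jid k r mm cc := g2_mem
      have hT3 : (X 0 * X 1 ^ (mm+1) : MvPolynomial (Fin 3) k) ∈ Jid k r mm cc := g3_mem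
      have hT4 : G4 k r mm cc ∈ Jid k r mm cc := g4_mem
      rw [Jid] at hT1 hT2 hT3 hT4
      rcases hx with rfl | rfl | rfl | rfl
      · have hid : A1v = X 2 ^ 2 + X 1 * G4 k r mm cc
            + (1 - MvPolynomial.C cc) * (X 0 * (X 1 ^ (mm+1) * X 2)) := by
          rw [hA1v, G4]; ring
        rw [hid]
        exact add_mem (add_mem hT1 (Ideal.mul_mem_left _ _ hT4))
          (Ideal.mul_mem_left _ _ (Ideal.mul_mem_left _ _ hT2))
      · exact hT2
      · have hid : A3v = G4 k r mm cc + (q * X 1 ^ r') * (X 1 ^ (mm+1) * X 2) := by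
          rw [hA3v, G4, hC, hrdef]; ring
        rw [hid]
        exact add_mem hT4 (Ideal.mul_mem_left _ _ hT2)
      · exact hT3
    · rw [Ideal.span_le]
      rintro x hx
      simp only [Set.mem_insert_iff, Set.mem_singleton_iff] at hx
      have hS1 : A1v ∈ Ideal.span {A1v, X 1 ^ (mm+1) * X 2, A3v,
          (X 0 * X 1 ^ (mm+1) : MvPolynomial (Fin 3) k)} :=
        Ideal.subset_span (by simp [Set.mem_insert_iff])
      have hS2 : (X 1 ^ (mm+1) * X 2 : MvPolynomial (Fin 3) k) ∈ Ideal.span {A1v,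
          X 1 ^ (mm+1) * X 2, A3v, (X 0 * X 1 ^ (mm+1) : MvPolynomial (Fin 3) k)} :=
        Ideal.subset_span (by simp [Set.mem_insert_iff])
      have hS3 : A3v ∈ Ideal.span {A1v, X 1 ^ (mm+1) * X 2, A3v,
          (X 0 * X 1 ^ (mm+1) : MvPolynomial (Fin 3) k)} :=
        Ideal.subset_span (by simp [Set.mem_insert_iff])
      have hS4 : (X 0 * X 1 ^ (mm+1) : MvPolynomial (Fin 3) k) ∈ Ideal.span {A1v,
          X 1 ^ (mm+1) * X 2, A3v, (X 0 * X 1 ^ (mm+1) : MvPolynomial (Fin 3) k)} :=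
        Ideal.subset_span (by simp [Set.mem_insert_iff])
      have hG4 : G4 k r mm cc ∈ Ideal.span {A1v, X 1 ^ (mm+1) * X 2, A3v,
          (X 0 * X 1 ^ (mm+1) : MvPolynomial (Fin 3) k)} := by
        have hid : G4 k r mm cc = A3v - (q * X 1 ^ r') * (X 1 ^ (mm+1) * X 2) := by
          rw [hA3v, G4, hC, hrdef]; ring
        rw [hid]
        exact sub_mem hS3 (Ideal.mul_mem_left _ _ hS2)
      rcases hx with rfl | rfl | rfl | rfl
      · have hid : (X 2 ^ 2 : MvPolynomial (Fin 3) k) = A1v - X 1 * G4 k r mm cc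
            - (1 - MvPolynomial.C cc) * (X 0 * (X 1 ^ (mm+1) * X 2)) := by
          rw [hA1v, G4]; ring
        rw [hid]
        exact sub_mem (sub_mem hS1 (Ideal.mul_mem_left _ _ hG4))
          (Ideal.mul_mem_left _ _ (Ideal.mul_mem_left _ _ hS2))
      · exact hS2
      · exact hS4
      · exact hG4
  -- transfer along the quotient equivalence
  have hr1 : 1 ≤ r := by omega
  obtain ⟨hfd, hfr⟩ := Jdim r mm hr1 cc
  set Jm : Ideal (MvPolynomial (Fin 3) k) :=
    Ideal.map ((phi r : MvPolynomial (Fin 3) k ≃ₐ[k] _)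
      : MvPolynomial (Fin 3) k →+* MvPolynomial (Fin 3) k) bb with hJm
  have e : (MvPolynomial (Fin 3) k ⧸ bb) ≃ₐ[k] (MvPolynomial (Fin 3) k ⧸ Jm) :=
    Ideal.quotientEquivAlg bb Jm (phi r) hJm
  have le : (MvPolynomial (Fin 3) k ⧸ bb) ≃ₗ[k] (MvPolynomial (Fin 3) k ⧸ Jm) :=
    e.toLinearEquiv
  rw [← hmap] at hfd hfr
  constructor
  · exact Module.Finite.equiv le.symm
  · rw [le.finrank_eq, hfr]
end outer

end TjurinaAux



open TjurinaAux in
/-- For `P = z² + x²y + yⁿz + x·y^{n-r}·z` in `A = k[x,y,z]` over a field `k` of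
characteristic `2`, with `n ≥ 2` and `1 ≤ r ≤ n - 1`, the quotient of `A` by the ideal
`𝔟 = (P, ∂P/∂x, ∂P/∂y, ∂P/∂z)` is a finite-dimensional `k`-vector space of dimension
exactly `4n - 2r`. -/
theorem tjurina_dim_D2n1_r (k : Type*) [Field k] [CharP k 2]
    (n r : ℕ) (hn : 2 ≤ n) (hr1 : 1 ≤ r) (hr : r ≤ n - 1) :
    let P : MvPolynomial (Fin 3) k :=
      X 2 ^ 2 + X 0 ^ 2 * X 1 + X 1 ^ n * X 2 + X 0 * X 1 ^ (n - r) * X 2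
    let b : Ideal (MvPolynomial (Fin 3) k) :=
      Ideal.span {P, pderiv 0 P, pderiv 1 P, pderiv 2 P}
    FiniteDimensional k (MvPolynomial (Fin 3) k ⧸ b) ∧
      Module.finrank k (MvPolynomial (Fin 3) k ⧸ b) = 4 * n - 2 * r := by
  intro P b
  obtain ⟨r', rfl⟩ : ∃ r', r = r' + 1 := ⟨r - 1, by omega⟩
  obtain ⟨mm, hmm⟩ : ∃ mm, n - (r' + 1) = mm + 1 := ⟨n - (r'+1) - 1, by omega⟩
  have hn' : n = mm + 1 + (r' + 1) := by omega
  have hP : P = X 2 ^ 2 + X 0 ^ 2 * X 1 + X 1 ^ (mm+1+(r'+1)) * X 2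
      + X 0 * X 1 ^ (mm+1) * X 2 := by
    show (X 2 ^ 2 + X 0 ^ 2 * X 1 + X 1 ^ n * X 2 + X 0 * X 1 ^ (n - (r'+1)) * X 2
      : MvPolynomial (Fin 3) k) = _
    rw [hmm, hn']
  have hb : b = Ideal.span {X 2 ^ 2 + X 0 ^ 2 * X 1 + X 1 ^ (mm+1+(r'+1)) * X 2
      + X 0 * X 1 ^ (mm+1) * X 2,
      pderiv 0 (X 2 ^ 2 + X 0 ^ 2 * X 1 + X 1 ^ (mm+1+(r'+1)) * X 2 + X 0 * X 1 ^ (mm+1) * X 2),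
      pderiv 1 (X 2 ^ 2 + X 0 ^ 2 * X 1 + X 1 ^ (mm+1+(r'+1)) * X 2 + X 0 * X 1 ^ (mm+1) * X 2),
      pderiv 2 (X 2 ^ 2 + X 0 ^ 2 * X 1 + X 1 ^ (mm+1+(r'+1)) * X 2
        + X 0 * X 1 ^ (mm+1) * X 2)} := by
    show Ideal.span {P, pderiv 0 P, pderiv 1 P, pderiv 2 P} = _
    rw [hP]
  rw [hb, show 4 * n - 2 * (r'+1) = 4*(mm+1) + 2*(r'+1) from by omega]
  exact TjurinaAux.outer r' mm
end
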